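/- Let H = Z(a,c) be an M×M zig-zag matrix and assume a_k ≠ a_{k+1} for every k = 1,…,M−1. Let 𝟙 ∈ ℝ^M be the all-ones vector and define q ∈ ℝ^{M-1} by q_k = (−1)^k c_k/(a_k − a_{k+1}) (i.e., q_k = −c_k/(a_k − a_{k+1}) for odd k and q_k = c_k/(a_k − a_{k+1}) for even k). Then H^T · (Z(𝟙,q))^T = (Z(𝟙,q))^T · D, where D is the diagonal matrix with diagonal entries a_1,…,a_M; equivalently, for each n = 1,…,M the n-th column of (Z(𝟙,q))^T is an eigenvector of the transposed Hamiltonian H^T with eigenvalue a_n, normalized to have n-th entry equal to 1. -/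
import Mathlib


open Matrix

/-- The `M × M` zig-zag matrix `Z(a,c)` built from the (1-based) diagonal
parameters `a₁, …, a_M` and off-diagonal parameters `c₁, …, c_{M-1}`:
`Z[i,i] = aᵢ` for all `i`; for every even (1-based) row index `i`,
`Z[i,i-1] = c_{i-1}` and (when `i+1 ≤ M`) `Z[i,i+1] = cᵢ`; all other
entries vanish.  (Rows/columns `i : Fin M` carry the 1-based label `i.val + 1`.) -/
def zigzag (M : ℕ) (a c : ℕ → ℝ) : Matrix (Fin M) (Fin M) ℝ :=
  Matrix.of fun i j =>
    if i.val = j.val then a (i.val + 1)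
    else if (i.val + 1) % 2 = 0 ∧ j.val + 1 = i.val then c (j.val + 1)
    else if (i.val + 1) % 2 = 0 ∧ j.val = i.val + 1 then c (i.val + 1)
    else 0

/-- Diagonalization of the transposed zig-zag Hamiltonian `Hᵀ = Z(a,c)ᵀ`: if
`a_k ≠ a_{k+1}` for `k = 1, …, M-1` and `q_k = (-1)^k c_k/(a_k - a_{k+1})`,
then `Hᵀ · Z(𝟙,q)ᵀ = Z(𝟙,q)ᵀ · D` with `D = diag(a₁, …, a_M)`; i.e. the
`n`-th column of `Z(𝟙,q)ᵀ` is an eigenvector of `Hᵀ` with eigenvalue `aₙ`,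
normalized to have `n`-th entry `1`. -/
theorem zigzag_transpose_eigvec_matrix (M : ℕ) (a c : ℕ → ℝ)
    (ha : ∀ k, 1 ≤ k → k + 1 ≤ M → a k ≠ a (k + 1)) :
    (zigzag M a c)ᵀ
        * (zigzag M (fun _ => 1)
            (fun k => (-1 : ℝ) ^ k * c k / (a k - a (k + 1))))ᵀ
      = (zigzag M (fun _ => 1)
            (fun k => (-1 : ℝ) ^ k * c k / (a k - a (k + 1))))ᵀ
        * Matrix.diagonal (fun i : Fin M => a (i.val + 1)) := by
  set q : ℕ → ℝ := fun k => (-1 : ℝ) ^ k * c k / (a k - a (k + 1)) with hqdef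
  set Q : Matrix (Fin M) (Fin M) ℝ := zigzag M (fun _ => 1) q with hQdef
  set H : Matrix (Fin M) (Fin M) ℝ := zigzag M a c with hHdef
  set D : Matrix (Fin M) (Fin M) ℝ :=
    Matrix.diagonal (fun i : Fin M => a (i.val + 1)) with hDdef
  set N : Matrix (Fin M) (Fin M) ℝ := Q - 1 with hNdef
  set C : Matrix (Fin M) (Fin M) ℝ := H - D with hCdef
  have hNC : N * C = 0 := by
    ext i j
    rw [Matrix.mul_apply, Matrix.zero_apply]
    apply Finset.sum_eq_zero
    intro k _
    simp only [hNdef, hCdef, hQdef, hHdef, hDdef, Matrix.sub_apply, Matrix.one_apply,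
      Matrix.diagonal_apply, zigzag, Matrix.of_apply]
    simp only [Fin.ext_iff]
    split_ifs <;> (first | ring1 | (exfalso; omega))
  have hC : C = D * N - N * D := by
    ext i j
    simp only [hCdef, hNdef, hQdef, hHdef, hDdef, Matrix.sub_apply,
      Matrix.diagonal_mul, Matrix.mul_diagonal, Matrix.one_apply,
      Matrix.diagonal_apply, zigzag, Matrix.of_apply]
    simp only [Fin.ext_iff]
    split_ifs <;> (first | ring1 | (exfalso; omega) | skip)
    · -- case j + 1 = i, i odd
      rename_i hne hcond
      obtain ⟨hp, hji⟩ := hcond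
      have h1M : i.val + 1 ≤ M := i.isLt
      have key : a i.val ≠ a (i.val + 1) := ha i.val (by omega) (by omega)
      have hsub : a i.val - a (i.val + 1) ≠ 0 := sub_ne_zero.mpr key
      have hodd : (-1 : ℝ) ^ (i.val : ℕ) = -1 := Odd.neg_one_pow (Nat.odd_iff.mpr (by omega))
      rw [hji, hqdef]
      simp only
      rw [hodd]
      field_simp
      ring
    · -- case j = i + 1, i odd
      rename_i hne hn1 hcond
      obtain ⟨hp, hji⟩ := hcond
      have h1M : (i.val + 1) + 1 ≤ M := by have := j.isLt; omega
      have key : a (i.val + 1) ≠ a (i.val + 1 + 1) := ha (i.val + 1) (by omega) h1M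
      have hsub : a (i.val + 1) - a (i.val + 1 + 1) ≠ 0 := sub_ne_zero.mpr key
      have heven : (-1 : ℝ) ^ ((i.val : ℕ) + 1) = 1 := Even.neg_one_pow (Nat.even_iff.mpr (by omega))
      rw [hji, hqdef]
      simp only
      rw [heven]
      field_simp
      ring
  have key : Q * H = D * Q := by
    have h1 : H = D + C := by rw [hCdef]; abel
    have h2 : Q = 1 + N := by rw [hNdef]; abel
    rw [h1, h2, add_mul, one_mul, mul_add, mul_add, hNC, hC]
    noncomm_ring
  calc (zigzag M a c)ᵀ * Qᵀ = (Q * H)ᵀ := by rw [← Matrix.transpose_mul, hHdef]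
    _ = (D * Q)ᵀ := by rw [key]
    _ = Qᵀ * Dᵀ := Matrix.transpose_mul _ _
    _ = Qᵀ * D := by rw [hDdef, Matrix.diagonal_transpose]
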